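/- arXiv:2306.12625 — 2 statements merged into one kernel-verified Lean document; each statement's English description precedes it below -/
import Mathlib

section
/- Let $p$ be a probability measure and $q \ll p$ with density $\rho$. Suppose $K = e^{L - r}$ and $a = e^{L - r/2}$ where $L = D_{KL}(q \| p)$ and $r \geq 0$, and let $Y_1, \dots, Y_K$ be i.i.d. with law $p$ and $I_K(\mathbf{1}) = \frac{1}{K}\sum_{k=1}^K \rho(Y_k)$. Then for any $\delta \in (0,1)$, $\mathbb{P}(I_K(\mathbf{1}) \geq 1 - \delta) \leq e^{-r/2} + \frac{\mathbb{P}_{X \sim q}(\log \rho(X) \leq L - r/2)}{1 - \delta}$. -/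
open MeasureTheory ProbabilityTheory

/-- Single-user converse part of Theorem 1 (Chatterjee–Diaconis): with
`K = e^{L-r}` samples and threshold `a = e^{L-r/2}`, where `L = D_KL(q‖p)`,
the self-normalizing sum fails to reach `1-δ` except with the stated probability. -/
theorem stmt_15 {X : Type*} [MeasurableSpace X] (p q : Measure X)
    [IsProbabilityMeasure p] [IsProbabilityMeasure q] (hqp : q ≪ p)
    (ρ : X → ℝ) (hρ : ρ = fun x => (q.rnDeriv p x).toReal)
    (L : ℝ) (hL : L = ∫ x, Real.log (ρ x) ∂q)
    (r : ℝ) (hr : 0 ≤ r)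
    (K : ℕ) (hK : (K : ℝ) = Real.exp (L - r))
    {Ω : Type*} [MeasurableSpace Ω] (μ : Measure Ω) [IsProbabilityMeasure μ]
    (Y : Fin K → Ω → X) (hmeas : ∀ k, Measurable (Y k))
    (hindep : iIndepFun Y μ)
    (hlaw : ∀ k, Measure.map (Y k) μ = p)
    (δ : ℝ) (hδ : δ ∈ Set.Ioo (0 : ℝ) 1) :
    μ {ω | 1 - δ ≤ (∑ k, ρ (Y k ω)) / K}
      ≤ ENNReal.ofReal (Real.exp (-r / 2))
        + q {x | Real.log (ρ x) ≤ L - r / 2} / ENNReal.ofReal (1 - δ) := by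

  obtain ⟨hδ0, hδ1⟩ := hδ
  have hδ1' : (0:ℝ) < 1 - δ := by linarith
  set a : ℝ := Real.exp (L - r/2) with ha
  have ha0 : 0 < a := Real.exp_pos _
  set g : X → ENNReal := q.rnDeriv p with hg
  have hgmeas : Measurable g := Measure.measurable_rnDeriv q p
  have hρmeas : Measurable ρ := by rw [hρ]; exact hgmeas.ennreal_toReal
  have hρnn : ∀ x, 0 ≤ ρ x := by intro x; rw [hρ]; exact ENNReal.toReal_nonneg
  have hKpos : (0:ℝ) < K := by rw [hK]; exact Real.exp_pos _
  have hKne : (K:ENNReal) ≠ 0 := by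
    simp only [ne_eq, Nat.cast_eq_zero]
    exact_mod_cast hKpos.ne'
  have hKtop : (K:ENNReal) ≠ ⊤ := ENNReal.natCast_ne_top K
  -- truncated density
  set ρb : X → ℝ := fun x => if ρ x ≤ a then ρ x else 0 with hρb
  have hρbmeas : Measurable ρb := Measurable.ite (measurableSet_le hρmeas measurable_const) hρmeas measurable_const
  have hρbnn : ∀ x, 0 ≤ ρb x := by
    intro x; simp only [hρb]; split <;> [exact hρnn x; exact le_refl 0]
  set A : Set Ω := {ω | ∃ k, a < ρ (Y k ω)} with hA
  set B : Set Ω := {ω | 1 - δ ≤ (∑ k, ρ (Y k ω)) / K} with hB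
  set T : Set X := {x | Real.log (ρ x) ≤ L - r / 2} with hT
  -- lintegral of rnDeriv composed with ofReal ∘ ρ is bounded by g
  have hofle : ∀ x, ENNReal.ofReal (ρ x) ≤ g x := by
    intro x; rw [hρ]; exact ENNReal.ofReal_toReal_le
  -- Step 1 : bound μ A
  have hpA : p {x | a < ρ x} ≤ 1 / ENNReal.ofReal a := by
    have h1 : p {x | a < ρ x} ≤ p {x | ENNReal.ofReal a ≤ ENNReal.ofReal (ρ x)} := by
      apply measure_mono
      intro x hx
      exact ENNReal.ofReal_le_ofReal (le_of_lt hx)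
    have h2 : p {x | ENNReal.ofReal a ≤ ENNReal.ofReal (ρ x)}
        ≤ (∫⁻ x, ENNReal.ofReal (ρ x) ∂p) / ENNReal.ofReal a :=
      meas_ge_le_lintegral_div (hρmeas.ennreal_ofReal).aemeasurable
        (by simp [ENNReal.ofReal_eq_zero, not_le, ha0]) ENNReal.ofReal_ne_top
    have h3 : (∫⁻ x, ENNReal.ofReal (ρ x) ∂p) ≤ 1 := by
      calc (∫⁻ x, ENNReal.ofReal (ρ x) ∂p) ≤ ∫⁻ x, g x ∂p := lintegral_mono hofle
        _ = q Set.univ := Measure.lintegral_rnDeriv hqp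
        _ = 1 := measure_univ
    refine h1.trans (h2.trans ?_)
    exact ENNReal.div_le_div_right h3 _
  have hstep1 : μ A ≤ ENNReal.ofReal (Real.exp (-r / 2)) := by
    have hAU : A = ⋃ k, {ω | a < ρ (Y k ω)} := by
      ext ω; simp [hA]
    have hone : ∀ k : Fin K, μ {ω | a < ρ (Y k ω)} = p {x | a < ρ x} := by
      intro k
      have : {ω | a < ρ (Y k ω)} = Y k ⁻¹' {x | a < ρ x} := rfl
      rw [this, ← Measure.map_apply (hmeas k) (measurableSet_lt measurable_const hρmeas), hlaw k]
    calc μ A ≤ ∑' k : Fin K, μ {ω | a < ρ (Y k ω)} := by rw [hAU]; exact measure_iUnion_le _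
      _ = ∑ k : Fin K, μ {ω | a < ρ (Y k ω)} := tsum_fintype _
      _ ≤ ∑ k : Fin K, (1 / ENNReal.ofReal a) := by
          exact Finset.sum_le_sum fun k _ => (hone k) ▸ hpA
      _ = (K : ENNReal) * (1 / ENNReal.ofReal a) := by
          simp [Finset.sum_const, Finset.card_univ]
      _ = ENNReal.ofReal (K : ℝ) / ENNReal.ofReal a := by
          rw [ENNReal.ofReal_natCast]; rw [mul_one_div]
      _ = ENNReal.ofReal ((K : ℝ) / a) := (ENNReal.ofReal_div_of_pos ha0).symm
      _ = ENNReal.ofReal (Real.exp (-r / 2)) := by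
          rw [hK, ha, ← Real.exp_sub]; ring_nf
  -- q of null sets
  have hq0 : q (g ⁻¹' {0}) = 0 := by
    have := Measure.setLIntegral_rnDeriv hqp (g ⁻¹' {0})
    rw [← hg] at this
    rw [← this, lintegral_eq_zero_iff hgmeas, Filter.EventuallyEq,
      ae_restrict_iff' (hgmeas (measurableSet_singleton 0))]
    exact Filter.Eventually.of_forall fun x hx => hx
  have hqtop : q {x | g x = ⊤} = 0 := by
    apply hqp
    have h := Measure.rnDeriv_lt_top q p
    rw [← hg] at h
    simpa [ae_iff] using h
  have hqS : q {x | ρ x ≤ a} ≤ q T := by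
    have hsub : {x | ρ x ≤ a} ⊆ T ∪ ((g ⁻¹' {0}) ∪ {x | g x = ⊤}) := by
      intro x hx
      by_cases h0 : g x = 0
      · exact Or.inr (Or.inl (by exact h0))
      by_cases htop : g x = ⊤
      · exact Or.inr (Or.inr htop)
      left
      have hpos : 0 < ρ x := by
        rw [hρ]; exact ENNReal.toReal_pos h0 htop
      have : Real.log (ρ x) ≤ Real.log a := Real.log_le_log hpos hx
      rwa [ha, Real.log_exp] at this
    calc q {x | ρ x ≤ a} ≤ q (T ∪ ((g ⁻¹' {0}) ∪ {x | g x = ⊤})) := measure_mono hsub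
      _ ≤ q T + q ((g ⁻¹' {0}) ∪ {x | g x = ⊤}) := measure_union_le _ _
      _ ≤ q T + (q (g ⁻¹' {0}) + q {x | g x = ⊤}) := by
          exact add_le_add_right (measure_union_le _ _) _
      _ = q T := by rw [hq0, hqtop]; simp
  -- bound the truncated lintegral
  have hlint : (∫⁻ x, ENNReal.ofReal (ρb x) ∂p) ≤ q T := by
    have hb : ∀ x, ENNReal.ofReal (ρb x) ≤ {x | ρ x ≤ a}.indicator g x := by
      intro x
      simp only [hρb, Set.indicator]
      by_cases h : ρ x ≤ a
      · simp only [h, if_true, Set.mem_setOf_eq]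
        exact hofle x
      · simp [h]
    calc (∫⁻ x, ENNReal.ofReal (ρb x) ∂p) ≤ ∫⁻ x, {x | ρ x ≤ a}.indicator g x ∂p :=
          lintegral_mono hb
      _ = ∫⁻ x in {x | ρ x ≤ a}, g x ∂p :=
          lintegral_indicator (measurableSet_le hρmeas measurable_const) g
      _ = q {x | ρ x ≤ a} := Measure.setLIntegral_rnDeriv hqp _
      _ ≤ q T := hqS
  -- Step 2
  have hstep2 : μ (B \ A) ≤ q T / ENNReal.ofReal (1 - δ) := by
    set f : Ω → ENNReal := fun ω => ENNReal.ofReal (∑ k, ρb (Y k ω)) with hf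
    have hfmeas : Measurable f := by
      apply Measurable.ennreal_ofReal
      exact Finset.measurable_sum _ fun k _ => hρbmeas.comp (hmeas k)
    have hsub : B \ A ⊆ {ω | ENNReal.ofReal ((1 - δ) * K) ≤ f ω} := by
      rintro ω ⟨hωB, hωA⟩
      have hle : ∀ k, ρ (Y k ω) ≤ a := by
        intro k
        by_contra h
        exact hωA ⟨k, lt_of_not_ge h⟩
      have hsum : (∑ k, ρb (Y k ω)) = ∑ k, ρ (Y k ω) := by
        apply Finset.sum_congr rfl
        intro k _
        simp [hρb, hle k]
      have hωB' : (1 - δ) * K ≤ ∑ k, ρ (Y k ω) := by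
        have := hωB
        rw [hB] at this
        exact (le_div_iff₀ hKpos).mp this
      show ENNReal.ofReal ((1 - δ) * K) ≤ f ω
      rw [hf]
      exact ENNReal.ofReal_le_ofReal (by rw [hsum]; exact hωB')
    have hεne : ENNReal.ofReal ((1 - δ) * K) ≠ 0 := by
      simp only [ne_eq, ENNReal.ofReal_eq_zero, not_le]
      positivity
    have hmarkov : μ {ω | ENNReal.ofReal ((1 - δ) * K) ≤ f ω}
        ≤ (∫⁻ ω, f ω ∂μ) / ENNReal.ofReal ((1 - δ) * K) :=
      meas_ge_le_lintegral_div hfmeas.aemeasurable hεne ENNReal.ofReal_ne_top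
    have hlintf : (∫⁻ ω, f ω ∂μ) ≤ (K : ENNReal) * q T := by
      have heq : ∀ ω, f ω = ∑ k, ENNReal.ofReal (ρb (Y k ω)) := by
        intro ω
        rw [hf]
        exact ENNReal.ofReal_sum_of_nonneg fun k _ => hρbnn _
      calc (∫⁻ ω, f ω ∂μ) = ∫⁻ ω, ∑ k, ENNReal.ofReal (ρb (Y k ω)) ∂μ := by
            simp_rw [heq]
        _ = ∑ k, ∫⁻ ω, ENNReal.ofReal (ρb (Y k ω)) ∂μ :=
            lintegral_finset_sum _ fun k _ => (hρbmeas.ennreal_ofReal).comp (hmeas k)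
        _ = ∑ k : Fin K, ∫⁻ x, ENNReal.ofReal (ρb x) ∂p := by
            apply Finset.sum_congr rfl
            intro k _
            rw [← hlaw k, lintegral_map hρbmeas.ennreal_ofReal (hmeas k)]
        _ ≤ ∑ k : Fin K, q T := Finset.sum_le_sum fun k _ => hlint
        _ = (K : ENNReal) * q T := by simp [Finset.sum_const, Finset.card_univ]
    calc μ (B \ A) ≤ μ {ω | ENNReal.ofReal ((1 - δ) * K) ≤ f ω} := measure_mono hsub
      _ ≤ (∫⁻ ω, f ω ∂μ) / ENNReal.ofReal ((1 - δ) * K) := hmarkov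
      _ ≤ ((K : ENNReal) * q T) / ENNReal.ofReal ((1 - δ) * K) :=
          ENNReal.div_le_div_right hlintf _
      _ = ((K : ENNReal) * q T) / ((K : ENNReal) * ENNReal.ofReal (1 - δ)) := by
          rw [ENNReal.ofReal_mul hδ1'.le, ENNReal.ofReal_natCast,
            mul_comm (ENNReal.ofReal (1 - δ)) (K : ENNReal)]
      _ = q T / ENNReal.ofReal (1 - δ) := ENNReal.mul_div_mul_left _ _ hKne hKtop
  calc μ B ≤ μ (A ∪ (B \ A)) := by
        apply measure_mono
        intro ω hω
        by_cases h : ω ∈ A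
        · exact Or.inl h
        · exact Or.inr ⟨hω, h⟩
    _ ≤ μ A + μ (B \ A) := measure_union_le _ _
    _ ≤ ENNReal.ofReal (Real.exp (-r / 2)) + q T / ENNReal.ofReal (1 - δ) :=
        add_le_add hstep1 hstep2
end

section
/- Let $p$ be a probability measure, $q \ll p$ with density $\rho$, $f$ square-integrable under $q$ with $\|f\|_q = \sqrt{\mathbb{E}_{X\sim q}[f(X)^2]}$, and set $L = D_{KL}(q\|p)$, $r \geq 0$, $K = e^{L+r}$, $a = e^{L + r/2}$. Let $Y_1, \dots, Y_K$ be i.i.d. with law $p$ and $I_K(f) = \frac{1}{K}\sum_{k=1}^K f(Y_k)\rho(Y_k)$, $I(f) = \mathbb{E}_{X \sim q}[f(X)]$. Then $\mathbb{E}|I_K(f) - I(f)| \leq \|f\|_q \big( e^{-r/4} + 2\sqrt{\mathbb{P}_{X\sim q}(\log \rho(X) > L + r/2)} \big)$. -/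
open MeasureTheory ProbabilityTheory

lemma my_cs {α : Type*} [MeasurableSpace α] (μ : Measure α) (f g : α → ℝ)
    (hf : MemLp f 2 μ) (hg : MemLp g 2 μ) :
    ∫ x, f x * g x ∂μ ≤ Real.sqrt (∫ x, f x ^ 2 ∂μ) * Real.sqrt (∫ x, g x ^ 2 ∂μ) := by
  set F : Lp ℝ 2 μ := hf.toLp f with hF
  set G : Lp ℝ 2 μ := hg.toLp g with hG
  have hFf : F =ᵐ[μ] f := hf.coeFn_toLp
  have hGg : G =ᵐ[μ] g := hg.coeFn_toLp
  have h1 : ∫ x, f x * g x ∂μ = (inner ℝ F G) := by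
    rw [L2.inner_def]
    refine integral_congr_ae ?_
    filter_upwards [hFf, hGg] with x hx hy
    simp [hx, hy, RCLike.inner_apply, mul_comm]
  have hFn : Real.sqrt (∫ x, f x ^ 2 ∂μ) = ‖F‖ := by
    have h2 : ∫ x, f x ^ 2 ∂μ = (inner ℝ F F) := by
      rw [L2.inner_def]
      refine integral_congr_ae ?_
      filter_upwards [hFf] with x hx
      simp [hx, RCLike.inner_apply, sq]
    rw [h2, real_inner_self_eq_norm_mul_norm, Real.sqrt_mul_self (norm_nonneg _)]
  have hGn : Real.sqrt (∫ x, g x ^ 2 ∂μ) = ‖G‖ := by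
    have h2 : ∫ x, g x ^ 2 ∂μ = (inner ℝ G G) := by
      rw [L2.inner_def]
      refine integral_congr_ae ?_
      filter_upwards [hGg] with x hx
      simp [hx, RCLike.inner_apply, sq]
    rw [h2, real_inner_self_eq_norm_mul_norm, Real.sqrt_mul_self (norm_nonneg _)]
  rw [h1, hFn, hGn]
  exact real_inner_le_norm F G

lemma my_abs_le {α : Type*} [MeasurableSpace α] (μ : Measure α) [IsProbabilityMeasure μ]
    (Z : α → ℝ) (hZ : MemLp Z 2 μ) :
    ∫ x, |Z x| ∂μ ≤ Real.sqrt (∫ x, Z x ^ 2 ∂μ) := by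
  have h := my_cs μ (fun x => |Z x|) (fun _ => (1 : ℝ)) hZ.abs (memLp_const 1)
  simpa [sq_abs] using h

/-- Single-user direct part of Theorem 1: with `K = e^{L+r}` samples, the
unnormalized importance sampling estimate satisfies
`𝔼|I_K(f) - I(f)| ≤ ‖f‖_q (e^{-r/4} + 2√ℙ_{X∼q}(log ρ(X) > L + r/2))`. -/
theorem stmt_16 {X : Type*} [MeasurableSpace X] (p q : Measure X)
    [IsProbabilityMeasure p] [IsProbabilityMeasure q] (hqp : q ≪ p)
    (ρ : X → ℝ) (hρ : ρ = fun x => (q.rnDeriv p x).toReal)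
    (f : X → ℝ) (hf : Measurable f) (hL2 : MemLp f 2 q)
    (L : ℝ) (hL : L = ∫ x, Real.log (ρ x) ∂q)
    (r : ℝ) (hr : 0 ≤ r)
    (K : ℕ) (hK : (K : ℝ) = Real.exp (L + r))
    {Ω : Type*} [MeasurableSpace Ω] (μ : Measure Ω) [IsProbabilityMeasure μ]
    (Y : Fin K → Ω → X) (hmeas : ∀ k, Measurable (Y k))
    (hindep : iIndepFun Y μ)
    (hlaw : ∀ k, Measure.map (Y k) μ = p) :
    ∫ ω, |(∑ k, f (Y k ω) * ρ (Y k ω)) / K - ∫ x, f x ∂q| ∂μ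
      ≤ Real.sqrt (∫ x, f x ^ 2 ∂q) *
        (Real.exp (-r / 4)
          + 2 * Real.sqrt ((q {x | L + r / 2 < Real.log (ρ x)}).toReal)) := by
  have hKpos : (0 : ℝ) < K := by rw [hK]; exact Real.exp_pos _
  have hKne : (K : ℝ) ≠ 0 := hKpos.ne'
  have hρmeas : Measurable ρ := by rw [hρ]; exact (Measure.measurable_rnDeriv q p).ennreal_toReal
  have hρnn : ∀ x, 0 ≤ ρ x := by intro x; rw [hρ]; exact ENNReal.toReal_nonneg
  -- change of variables
  have cov : ∀ φ : X → ℝ, ∫ x, ρ x * φ x ∂p = ∫ x, φ x ∂q := by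
    intro φ
    rw [hρ]
    simpa [smul_eq_mul] using integral_rnDeriv_smul (μ := q) (ν := p) hqp (f := φ)
  have covInt : ∀ φ : X → ℝ, Integrable φ q → Integrable (fun x => ρ x * φ x) p := by
    intro φ hφ
    rw [hρ]
    simpa [smul_eq_mul] using (integrable_rnDeriv_smul_iff (μ := q) (ν := p) hqp
      (f := φ)).2 hφ
  set a : ℝ := Real.exp (L + r / 2) with ha_def
  have ha : 0 < a := Real.exp_pos _
  set A : Set X := {x | ρ x ≤ a} with hA_def
  have hA : MeasurableSet A := measurableSet_le hρmeas measurable_const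
  set g : X → ℝ := A.indicator (fun x => f x * ρ x) with hg_def
  set h : X → ℝ := Aᶜ.indicator (fun x => f x * ρ x) with hh_def
  have hgh : ∀ x, g x + h x = f x * ρ x := fun x =>
    congrFun (Set.indicator_self_add_compl A (fun x => f x * ρ x)) x
  set F : ℝ := ∫ x, f x ^ 2 ∂q with hF_def
  have hF0 : 0 ≤ F := integral_nonneg fun x => sq_nonneg _
  set I : ℝ := ∫ x, f x ∂q with hI_def
  set Q : ℝ := (q Aᶜ).toReal with hQ_def
  have hQ0 : 0 ≤ Q := ENNReal.toReal_nonneg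
  set Q' : ℝ := (q {x | L + r / 2 < Real.log (ρ x)}).toReal with hQ'_def
  -- basic integrability
  have hfq : Integrable f q := hL2.integrable one_le_two
  have hf2q : Integrable (fun x => f x ^ 2) q := hL2.integrable_sq
  have hfρ : Integrable (fun x => f x * ρ x) p := by
    have := covInt f hfq
    simpa [mul_comm] using this
  have hgmeas : Measurable g := (hf.mul hρmeas).indicator hA
  have hhmeas : Measurable h := (hf.mul hρmeas).indicator hA.compl
  have hgi : Integrable g p := hfρ.indicator hA
  have hhi : Integrable h p := hfρ.indicator hA.compl
  have hρf2 : Integrable (fun x => ρ x * f x ^ 2) p := covInt _ hf2q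
  -- pointwise bound on g²
  have hgsq : ∀ x, g x ^ 2 ≤ a * (ρ x * f x ^ 2) := by
    intro x
    by_cases hx : x ∈ A
    · rw [hg_def, Set.indicator_of_mem hx]
      have h2 : ρ x ≤ a := hx
      calc (f x * ρ x) ^ 2 = ρ x * (ρ x * f x ^ 2) := by ring
        _ ≤ a * (ρ x * f x ^ 2) :=
            mul_le_mul_of_nonneg_right h2 (mul_nonneg (hρnn x) (sq_nonneg _))
    · rw [hg_def, Set.indicator_of_notMem hx]
      simpa using mul_nonneg ha.le (mul_nonneg (hρnn x) (sq_nonneg _))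
  have hg2int : Integrable (fun x => g x ^ 2) p := by
    refine (hρf2.const_mul a).mono' ((hgmeas.pow_const 2).aestronglyMeasurable)
      (ae_of_all _ fun x => ?_)
    rw [Real.norm_eq_abs, abs_of_nonneg (sq_nonneg _)]
    exact hgsq x
  have hgmem : MemLp g 2 p := (memLp_two_iff_integrable_sq hgmeas.aestronglyMeasurable).2 hg2int
  have hEg2 : ∫ x, g x ^ 2 ∂p ≤ a * F := by
    calc ∫ x, g x ^ 2 ∂p ≤ ∫ x, a * (ρ x * f x ^ 2) ∂p :=
          integral_mono hg2int (hρf2.const_mul a) hgsq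
      _ = a * ∫ x, ρ x * f x ^ 2 ∂p := integral_const_mul _ _
      _ = a * F := by rw [cov]
  -- random variable versions
  have hgYmem : ∀ k, MemLp (fun ω => g (Y k ω)) 2 μ := by
    intro k
    have h0 : MemLp g 2 (Measure.map (Y k) μ) := by rw [hlaw k]; exact hgmem
    exact (memLp_map_measure_iff hgmeas.aestronglyMeasurable (hmeas k).aemeasurable).1 h0
  set m : ℝ := ∫ x, g x ∂p with hm_def
  have hEgY : ∀ k, ∫ ω, g (Y k ω) ∂μ = m := by
    intro k
    have h0 : ∫ x, g x ∂(Measure.map (Y k) μ) = ∫ ω, g (Y k ω) ∂μ :=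
      integral_map (hmeas k).aemeasurable hgmeas.aestronglyMeasurable
    rw [hlaw k] at h0
    exact h0.symm
  have hvarY : ∀ k, variance (fun ω => g (Y k ω)) μ ≤ a * F := by
    intro k
    refine le_trans (variance_le_expectation_sq
      ((hgmeas.comp (hmeas k)).aestronglyMeasurable)) ?_
    have h2 : ∫ ω, (g (Y k ω)) ^ 2 ∂μ = ∫ x, g x ^ 2 ∂p := by
      have h0 : ∫ x, g x ^ 2 ∂(Measure.map (Y k) μ) = ∫ ω, (g (Y k ω)) ^ 2 ∂μ :=
        integral_map (hmeas k).aemeasurable ((hgmeas.pow_const 2).aestronglyMeasurable)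
      rw [hlaw k] at h0
      exact h0.symm
    have h3 : (∫ ω, ((fun ω => g (Y k ω)) ^ 2) ω ∂μ) = ∫ ω, (g (Y k ω)) ^ 2 ∂μ := by
      simp [Pi.pow_apply]
    rw [show μ[(fun ω => g (Y k ω)) ^ 2] = ∫ ω, ((fun ω => g (Y k ω)) ^ 2) ω ∂μ from rfl, h3, h2]
    exact hEg2
  set Sf : Fin K → Ω → ℝ := fun k ω => g (Y k ω) with hSf_def
  set S : Ω → ℝ := ∑ k, Sf k with hS_def
  have hSapp : ∀ ω, S ω = ∑ k, g (Y k ω) := by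
    intro ω; rw [hS_def]; simp [hSf_def]
  have hSmem : MemLp S 2 μ := memLp_finset_sum' _ (fun k _ => hgYmem k)
  have hpair : Set.Pairwise ↑(Finset.univ : Finset (Fin K))
      (fun i j => IndepFun (Sf i) (Sf j) μ) := by
    intro i _ j _ hij
    exact (hindep.indepFun hij).comp hgmeas hgmeas
  have hVarS : variance S μ ≤ K * (a * F) := by
    rw [hS_def, IndepFun.variance_sum (fun k _ => hgYmem k) hpair]
    calc ∑ k : Fin K, variance (Sf k) μ ≤ ∑ _k : Fin K, (a * F) :=
          Finset.sum_le_sum (fun k _ => hvarY k)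
      _ = K * (a * F) := by simp [Finset.sum_const, nsmul_eq_mul]
  have hμS : ∫ ω, S ω ∂μ = K * m := by
    rw [hS_def]
    have : ∫ ω, (∑ k, Sf k) ω ∂μ = ∑ k, ∫ ω, Sf k ω ∂μ := by
      simp only [Finset.sum_apply]
      exact integral_finset_sum _ (fun k _ => (hgYmem k).integrable one_le_two)
    rw [this]
    simp only [hSf_def]
    rw [Finset.sum_congr rfl (fun k _ => hEgY k)]
    simp [Finset.sum_const, nsmul_eq_mul]
  -- Term 1
  have term1 : ∫ ω, |S ω / K - m| ∂μ ≤ Real.sqrt F * Real.exp (-r / 4) := by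
    have hZmem : MemLp (fun ω => S ω - K * m) 2 μ := hSmem.sub (memLp_const _)
    have h1 : ∫ ω, |S ω / K - m| ∂μ = (1 / K) * ∫ ω, |S ω - K * m| ∂μ := by
      rw [← integral_const_mul]
      refine integral_congr_ae (ae_of_all _ fun ω => ?_)
      show |S ω / K - m| = 1 / K * |S ω - K * m|
      have h0 : S ω / K - m = (S ω - K * m) / K := by field_simp
      rw [h0, abs_div, abs_of_pos hKpos]
      ring
    have h2 : ∫ ω, |S ω - K * m| ∂μ ≤ Real.sqrt (variance S μ) := by
      refine (my_abs_le μ _ hZmem).trans (le_of_eq ?_)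
      congr 1
      rw [variance_eq_integral hSmem.1.aemeasurable, ← hμS]
    have h3 : Real.sqrt (variance S μ) ≤ Real.sqrt (K * (a * F)) := Real.sqrt_le_sqrt hVarS
    have h4 : (1 / (K : ℝ)) * Real.sqrt (K * (a * F)) = Real.sqrt F * Real.exp (-r / 4) := by
      have haK : a / K = Real.exp (-r / 2) := by
        rw [ha_def, hK, ← Real.exp_sub]
        ring_nf
      have hsq : Real.sqrt (Real.exp (-r / 2)) = Real.exp (-r / 4) := by
        rw [show Real.exp (-r / 2) = Real.exp (-r / 4) ^ 2 by
          rw [sq, ← Real.exp_add]; ring_nf]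
        exact Real.sqrt_sq (Real.exp_nonneg _)
      have h5 : (K : ℝ) * (a * F) = (a / K * F) * (K : ℝ) ^ 2 := by field_simp
      rw [h5, Real.sqrt_mul (by positivity) ((K : ℝ) ^ 2), Real.sqrt_sq hKpos.le,
        Real.sqrt_mul (by positivity) F, haK, hsq]
      field_simp
    calc ∫ ω, |S ω / K - m| ∂μ = (1 / K) * ∫ ω, |S ω - K * m| ∂μ := h1
      _ ≤ (1 / K) * Real.sqrt (K * (a * F)) := by
          apply mul_le_mul_of_nonneg_left (h2.trans h3) (by positivity)
      _ = Real.sqrt F * Real.exp (-r / 4) := h4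
  -- Term 2 and Term 3 preliminaries
  have hhY : ∀ k, Integrable (fun ω => h (Y k ω)) μ := by
    intro k
    have h0 : Integrable h (Measure.map (Y k) μ) := by rw [hlaw k]; exact hhi
    exact (integrable_map_measure hhmeas.aestronglyMeasurable (hmeas k).aemeasurable).1 h0
  have hEhY : ∀ k, ∫ ω, |h (Y k ω)| ∂μ = ∫ x, |h x| ∂p := by
    intro k
    have h0 : ∫ x, |h x| ∂(Measure.map (Y k) μ) = ∫ ω, |h (Y k ω)| ∂μ :=
      integral_map (hmeas k).aemeasurable hhmeas.abs.aestronglyMeasurable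
    rw [hlaw k] at h0
    exact h0.symm
  set T : Ω → ℝ := fun ω => ∑ k, h (Y k ω) with hT_def
  have hTint : Integrable T μ := integrable_finset_sum _ (fun k _ => hhY k)
  -- the key Cauchy-Schwarz tail bound
  have key : ∫ x, Aᶜ.indicator (fun y => |f y|) x ∂q ≤ Real.sqrt F * Real.sqrt Q := by
    have h3 := my_cs q (fun x => |f x|) (Aᶜ.indicator fun _ => (1 : ℝ)) hL2.abs
      ((memLp_const (1 : ℝ)).indicator hA.compl)
    have e1 : ∫ x, Aᶜ.indicator (fun y => |f y|) x ∂q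
        = ∫ x, |f x| * (Aᶜ.indicator (fun _ => (1 : ℝ)) x) ∂q := by
      refine integral_congr_ae (ae_of_all _ fun x => ?_)
      by_cases hx : x ∈ Aᶜ <;> simp [hx]
    have e2 : ∫ x, |f x| ^ 2 ∂q = F := by
      rw [hF_def]
      exact integral_congr_ae (ae_of_all _ fun x => by simp [sq_abs])
    have e3 : ∫ x, (Aᶜ.indicator (fun _ => (1 : ℝ)) x) ^ 2 ∂q = Q := by
      have e4 : ∀ x, (Aᶜ.indicator (fun _ => (1 : ℝ)) x) ^ 2
          = Aᶜ.indicator (fun _ => (1 : ℝ)) x := fun x => by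
        by_cases hx : x ∈ Aᶜ <;> simp [hx]
      rw [integral_congr_ae (ae_of_all _ e4), integral_indicator_const _ hA.compl]
      simp [hQ_def, Measure.real]
    rw [e1]
    calc ∫ x, |f x| * (Aᶜ.indicator (fun _ => (1 : ℝ)) x) ∂q
        ≤ Real.sqrt (∫ x, |f x| ^ 2 ∂q) *
          Real.sqrt (∫ x, (Aᶜ.indicator (fun _ => (1 : ℝ)) x) ^ 2 ∂q) := h3
      _ = Real.sqrt F * Real.sqrt Q := by rw [e2, e3]
  have hhq : ∫ x, |h x| ∂p ≤ Real.sqrt F * Real.sqrt Q := by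
    have h1 : ∫ x, |h x| ∂p = ∫ x, Aᶜ.indicator (fun y => |f y|) x ∂q := by
      rw [← cov]
      refine integral_congr_ae (ae_of_all _ fun x => ?_)
      by_cases hx : x ∈ Aᶜ
      · rw [hh_def]
        simp only [Set.indicator_of_mem hx]
        rw [abs_mul, abs_of_nonneg (hρnn x)]
        ring
      · rw [hh_def]
        simp [Set.indicator_of_notMem hx]
    rw [h1]
    exact key
  have term2 : ∫ ω, |T ω / K| ∂μ ≤ Real.sqrt F * Real.sqrt Q := by
    have h1 : ∫ ω, |T ω / K| ∂μ = (1 / K) * ∫ ω, |T ω| ∂μ := by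
      rw [← integral_const_mul]
      refine integral_congr_ae (ae_of_all _ fun ω => ?_)
      show |T ω / K| = 1 / K * |T ω|
      rw [abs_div, abs_of_pos hKpos]
      ring
    have h2 : ∫ ω, |T ω| ∂μ ≤ K * ∫ x, |h x| ∂p := by
      calc ∫ ω, |T ω| ∂μ ≤ ∫ ω, ∑ k, |h (Y k ω)| ∂μ := by
            refine integral_mono hTint.abs
              (integrable_finset_sum _ fun k _ => (hhY k).abs) (fun ω => ?_)
            exact Finset.abs_sum_le_sum_abs _ _
        _ = ∑ k, ∫ ω, |h (Y k ω)| ∂μ :=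
            integral_finset_sum _ (fun k _ => (hhY k).abs)
        _ = K * ∫ x, |h x| ∂p := by
            rw [Finset.sum_congr rfl fun k _ => hEhY k]
            simp [Finset.sum_const, nsmul_eq_mul]
    calc ∫ ω, |T ω / K| ∂μ = (1 / K) * ∫ ω, |T ω| ∂μ := h1
      _ ≤ (1 / K) * (K * ∫ x, |h x| ∂p) :=
          mul_le_mul_of_nonneg_left h2 (by positivity)
      _ = ∫ x, |h x| ∂p := by field_simp
      _ ≤ Real.sqrt F * Real.sqrt Q := hhq
  -- Term 3
  have hm_eq : m = ∫ x, A.indicator f x ∂q := by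
    rw [hm_def, ← cov]
    refine integral_congr_ae (ae_of_all _ fun x => ?_)
    by_cases hx : x ∈ A
    · rw [hg_def]
      simp only [Set.indicator_of_mem hx]
      ring
    · rw [hg_def]
      simp [Set.indicator_of_notMem hx]
  have hsplit : I - m = ∫ x, Aᶜ.indicator f x ∂q := by
    rw [hI_def, hm_eq, ← integral_sub hfq (hfq.indicator hA)]
    refine integral_congr_ae (ae_of_all _ fun x => ?_)
    by_cases hx : x ∈ A
    · simp [Set.indicator_of_mem hx, Set.indicator_of_notMem (by simpa using hx : x ∉ Aᶜ)]
    · simp [Set.indicator_of_notMem hx, Set.indicator_of_mem (by simpa using hx : x ∈ Aᶜ)]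
  have term3 : |m - I| ≤ Real.sqrt F * Real.sqrt Q := by
    rw [abs_sub_comm, hsplit]
    calc |∫ x, Aᶜ.indicator f x ∂q| ≤ ∫ x, |Aᶜ.indicator f x| ∂q := by
          simpa [Real.norm_eq_abs] using
            norm_integral_le_integral_norm (μ := q) (fun x => Aᶜ.indicator f x)
      _ = ∫ x, Aᶜ.indicator (fun y => |f y|) x ∂q := by
          refine integral_congr_ae (ae_of_all _ fun x => ?_)
          by_cases hx : x ∈ Aᶜ <;> simp [hx]
      _ ≤ Real.sqrt F * Real.sqrt Q := key
  -- tail monotonicity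
  have hQQ' : Real.sqrt Q ≤ Real.sqrt Q' := by
    apply Real.sqrt_le_sqrt
    rw [hQ_def, hQ'_def]
    apply ENNReal.toReal_mono (measure_ne_top q _)
    apply measure_mono
    intro x hx
    have hax : a < ρ x := not_le.1 hx
    have hlog : Real.log a < Real.log (ρ x) := Real.log_lt_log ha hax
    simpa [ha_def, Real.log_exp] using hlog
  -- assembly
  have hsum : ∀ ω, (∑ k, f (Y k ω) * ρ (Y k ω)) = S ω + T ω := by
    intro ω
    rw [hSapp]
    have hTω : T ω = ∑ k, h (Y k ω) := rfl
    rw [hTω, ← Finset.sum_add_distrib]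
    exact Finset.sum_congr rfl fun k _ => (hgh (Y k ω)).symm
  have hptW : ∀ ω, |(∑ k, f (Y k ω) * ρ (Y k ω)) / K - I|
      ≤ |S ω / K - m| + |T ω / K| + |m - I| := by
    intro ω
    rw [hsum ω]
    have h0 : (S ω + T ω) / K - I = (S ω / K - m) + (T ω / K) + (m - I) := by
      field_simp
      ring
    rw [h0]
    exact (abs_add_le _ _).trans (add_le_add_left (abs_add_le _ _) _)
  have i1 : Integrable (fun ω => |S ω / K - m|) μ :=
    (((hSmem.integrable one_le_two).div_const _).sub (integrable_const m)).abs
  have i2 : Integrable (fun ω => |T ω / K|) μ := (hTint.div_const _).abs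
  have iL : Integrable (fun ω => |(∑ k, f (Y k ω) * ρ (Y k ω)) / K - I|) μ := by
    have h0 : Integrable (fun ω => (S ω + T ω) / K - I) μ :=
      (((hSmem.integrable one_le_two).add hTint).div_const _).sub (integrable_const I)
    exact (h0.congr (ae_of_all _ fun ω => by rw [hsum ω])).abs
  calc ∫ ω, |(∑ k, f (Y k ω) * ρ (Y k ω)) / K - I| ∂μ
      ≤ ∫ ω, (|S ω / K - m| + |T ω / K| + |m - I|) ∂μ :=
        integral_mono iL ((i1.add i2).add (integrable_const _)) hptW
    _ = (∫ ω, |S ω / K - m| ∂μ) + (∫ ω, |T ω / K| ∂μ) + |m - I| := by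
        have e1 : ∫ ω, (|S ω / K - m| + |T ω / K| + |m - I|) ∂μ
            = (∫ ω, (|S ω / K - m| + |T ω / K|) ∂μ) + ∫ _ω, |m - I| ∂μ :=
          integral_add (i1.add i2) (integrable_const _)
        have e2 : ∫ ω, (|S ω / K - m| + |T ω / K|) ∂μ
            = (∫ ω, |S ω / K - m| ∂μ) + ∫ ω, |T ω / K| ∂μ := integral_add i1 i2
        rw [e1, e2, integral_const]
        simp
    _ ≤ Real.sqrt F * Real.exp (-r / 4) + Real.sqrt F * Real.sqrt Q
        + Real.sqrt F * Real.sqrt Q := add_le_add (add_le_add term1 term2) term3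
    _ ≤ Real.sqrt F * (Real.exp (-r / 4) + 2 * Real.sqrt Q') := by
        nlinarith [Real.sqrt_nonneg F, Real.sqrt_nonneg Q, hQQ']
end
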